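/- For every n ∈ ℕ, all nonzero complex r, s and all complex a, b with as ≠ q^n br, one has ∑_{k=0}^n [n choose k]_q q^{k(k−1)/2} a^{n−k} b^k · ([n−k]_q!/(q^{(n−k)(n−k+1)/2} r^{n−k+1})) · ([k]_q!/s^{k+1}) = (q^{−n(n+1)/2} [n]_q!/(as − q^n br)) · ((a/r)^{n+1} − (q^n b/s)^{n+1}). -/

import Mathlib

open Finset

/-- The q-number `[n]_q = (1 - q^n)/(1 - q)`. -/
noncomputable def qNum (q : ℝ) (n : ℕ) : ℝ := (1 - q ^ n) / (1 - q)

/-- The q-factorial `[n]_q! = ∏_{k=1}^n [k]_q`. -/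
noncomputable def qFact (q : ℝ) (n : ℕ) : ℝ := ∏ k ∈ Finset.range n, qNum q (k + 1)

/-- The q-binomial coefficient `[n choose k]_q`. -/
noncomputable def qBinom (q : ℝ) (n k : ℕ) : ℝ := qFact q n / (qFact q k * qFact q (n - k))

lemma qFact_pos (q : ℝ) (hq0 : 0 < q) (hq1 : q < 1) (m : ℕ) : 0 < qFact q m := by
  apply Finset.prod_pos
  intro k _
  have h1 : q ^ (k + 1) < 1 := pow_lt_one₀ hq0.le hq1 (Nat.succ_ne_zero k)
  have h2 : (0:ℝ) < 1 - q := by linarith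
  exact div_pos (by linarith) h2

lemma exp_key {k n : ℕ} (hk : k ≤ n) :
    k * (k - 1) / 2 + n * (n + 1) / 2 = n * k + (n - k) * (n - k + 1) / 2 := by
  obtain ⟨m, rfl⟩ := Nat.exists_eq_add_of_le hk
  rw [Nat.add_sub_cancel_left]
  cases k with
  | zero => simp
  | succ j =>
    have e1 : (j + 1) * (j + 1 - 1) = j * (j + 1) := by rw [Nat.add_sub_cancel]; ring
    rw [e1]
    obtain ⟨c1, hc1⟩ := Nat.even_mul_succ_self j
    obtain ⟨c2, hc2⟩ := Nat.even_mul_succ_self (j + 1 + m)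
    obtain ⟨c3, hc3⟩ := Nat.even_mul_succ_self m
    have key : j * (j + 1) + (j + 1 + m) * (j + 1 + m + 1) =
        2 * ((j + 1 + m) * (j + 1)) + m * (m + 1) := by ring
    rw [hc1, hc2, hc3] at key ⊢
    omega

theorem stmt_17 (q : ℝ) (hq0 : 0 < q) (hq1 : q < 1) (n : ℕ) (r s a b : ℂ)
    (hr : r ≠ 0) (hs : s ≠ 0) (h : a * s ≠ (q : ℂ) ^ n * b * r) :
    ∑ k ∈ Finset.range (n + 1),
        (qBinom q n k : ℂ) * (q : ℂ) ^ (k * (k - 1) / 2) * a ^ (n - k) * b ^ k *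
          ((qFact q (n - k) : ℂ) / ((q : ℂ) ^ ((n - k) * (n - k + 1) / 2) * r ^ (n - k + 1))) *
          ((qFact q k : ℂ) / s ^ (k + 1)) =
      (qFact q n : ℂ) / ((q : ℂ) ^ (n * (n + 1) / 2) * (a * s - (q : ℂ) ^ n * b * r)) *
        ((a / r) ^ (n + 1) - ((q : ℂ) ^ n * b / s) ^ (n + 1)) := by
  have hqC : (q : ℂ) ≠ 0 := by exact_mod_cast hq0.ne'
  have hd : a * s - (q : ℂ) ^ n * b * r ≠ 0 := sub_ne_zero.mpr h
  set X : ℂ := a / r with hX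
  set Y : ℂ := (q : ℂ) ^ n * b / s with hY
  set F : ℂ := (qFact q n : ℂ) with hF
  set N : ℕ := n * (n + 1) / 2 with hN
  -- termwise rewrite
  have step1 : ∀ k ∈ Finset.range (n + 1),
      (qBinom q n k : ℂ) * (q : ℂ) ^ (k * (k - 1) / 2) * a ^ (n - k) * b ^ k *
          ((qFact q (n - k) : ℂ) / ((q : ℂ) ^ ((n - k) * (n - k + 1) / 2) * r ^ (n - k + 1))) *
          ((qFact q k : ℂ) / s ^ (k + 1)) =
      F / ((q : ℂ) ^ N * r * s) * (Y ^ k * X ^ (n - k)) := by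
    intro k hk
    rw [Finset.mem_range] at hk
    have hkn : k ≤ n := Nat.lt_succ_iff.mp hk
    have hFk : qFact q k ≠ 0 := (qFact_pos q hq0 hq1 k).ne'
    have hFnk : qFact q (n - k) ≠ 0 := (qFact_pos q hq0 hq1 (n - k)).ne'
    have hFkC : (qFact q k : ℂ) ≠ 0 := by exact_mod_cast hFk
    have hFnkC : (qFact q (n - k) : ℂ) ≠ 0 := by exact_mod_cast hFnk
    have hbin : (qBinom q n k : ℂ) * (qFact q k : ℂ) * (qFact q (n - k) : ℂ) = F := by
      rw [hF, qBinom]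
      push_cast
      field_simp
    have hexp : (q : ℂ) ^ (k * (k - 1) / 2) * (q : ℂ) ^ N =
        ((q : ℂ) ^ n) ^ k * (q : ℂ) ^ ((n - k) * (n - k + 1) / 2) := by
      rw [← pow_mul, ← pow_add, ← pow_add, hN, exp_key hkn]
    rw [hX, hY, div_pow, div_pow, mul_pow]
    field_simp
    rw [pow_succ r, pow_succ s]
    linear_combination (a ^ (n-k) * b ^ k * (r ^ (n-k) * r) * (s ^ k * s) *
        ((q:ℂ) ^ (k*(k-1)/2) * (q:ℂ) ^ N)) * hbin +
      (a ^ (n-k) * b ^ k * (r ^ (n-k) * r) * (s ^ k * s) * F) * hexp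
  rw [Finset.sum_congr rfl step1, ← Finset.mul_sum]
  have geom := geom_sum₂_mul Y X (n + 1)
  have hS : ∑ k ∈ Finset.range (n + 1), Y ^ k * X ^ (n - k)
      = ∑ i ∈ Finset.range (n + 1), Y ^ i * X ^ (n + 1 - 1 - i) := by
    apply Finset.sum_congr rfl
    intro i _
    congr 1
  rw [hS]
  have hXY : X - Y = (a * s - (q : ℂ) ^ n * b * r) / (r * s) := by
    rw [hX, hY]
    field_simp
  have hfin : (a / r) ^ (n + 1) - ((q : ℂ) ^ n * b / s) ^ (n + 1)
      = (∑ i ∈ Finset.range (n + 1), Y ^ i * X ^ (n + 1 - 1 - i)) * (X - Y) := by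
    have : X ^ (n + 1) - Y ^ (n + 1)
        = -((∑ i ∈ Finset.range (n + 1), Y ^ i * X ^ (n + 1 - 1 - i)) * (Y - X)) := by
      rw [geom]; ring
    rw [← hX, ← hY]
    rw [this]; ring
  rw [hfin, hXY]
  field_simp
  have hd' : s * a - r * (q:ℂ) ^ n * b ≠ 0 := by intro e; apply hd; linear_combination e
  field_simp
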